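/- arXiv:2005.00213 — 5 statements merged into one kernel-verified Lean document; each statement's English description precedes it below -/
import Mathlib

section
/- Let A be a commutative group, X a commutative partial monoid, and i : A → X an injective homomorphism such that i(a) + x is defined for all a ∈ A, x ∈ X. Then any trivialisation φ : X → A × X/A (a homomorphism with φ ∘ i = in₁ and proj₂ ∘ φ = π, where π : X → X/A is the quotient by the action a·x = i(a)+x) is an isomorphism, with inverse (a,[x]) ↦ x + i(a − proj₁(φ(x))). -/
/-- A commutative partial monoid: addition is partially defined (via `Option`),
commutative, unital, and associative where defined. -/
structure PCM (X : Type*) where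
  add : X → X → Option X
  zero : X
  comm : ∀ x y, add x y = add y x
  zero_add : ∀ x, add zero x = some x
  assoc : ∀ x y z xy yz, add x y = some xy → add y z = some yz →
    add xy z = add x yz

/-- Homomorphism of commutative partial monoids. -/
def PCM.IsHom {X Y : Type*} (MX : PCM X) (MY : PCM Y) (f : X → Y) : Prop :=
  f MX.zero = MY.zero ∧
  ∀ x y z, MX.add x y = some z → MY.add (f x) (f y) = some (f z)

/-- `i : A → X` is an injective homomorphism of the group `A` into the
partial monoid `X` such that `i a + x` is always defined. -/
structure EmbedData {A X : Type*} [AddCommGroup A] (MX : PCM X) (i : A → X) : Prop where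
  inj : Function.Injective i
  map_zero : i 0 = MX.zero
  map_add : ∀ a b, MX.add (i a) (i b) = some (i (a + b))
  total : ∀ a x, (MX.add (i a) x).isSome

/-- The action `l_A : (a, x) ↦ i a + x` is free. -/
def FreeAction {A X : Type*} [AddCommGroup A] (MX : PCM X) (i : A → X) : Prop :=
  ∀ a a' x y, MX.add (i a) x = some y → MX.add (i a') x = some y → a = a'

/-- `π : X → Q` presents `Q` as the orbit space `X/A` of the action of `A` on `X`
via `i`, with the induced partial monoid structure. -/
structure QuotData {A X Q : Type*} [AddCommGroup A] (MX : PCM X) (MQ : PCM Q)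
    (i : A → X) (π : X → Q) : Prop where
  surj : Function.Surjective π
  orbit : ∀ x y, π x = π y ↔ ∃ a, MX.add (i a) x = some y
  hom : MX.IsHom MQ π
  lift : ∀ x y q, MQ.add (π x) (π y) = some q → (MX.add x y).isSome

/-- A left splitting of `A → X → X/A`: a homomorphism `s : X → A` with `s ∘ i = id`. -/
def IsLeftSplit {A X : Type*} [AddCommGroup A] (MX : PCM X) (i : A → X) (s : X → A) : Prop :=
  s MX.zero = 0 ∧
  (∀ x y z, MX.add x y = some z → s z = s x + s y) ∧
  (∀ a, s (i a) = a)

/-- A right splitting of `A → X → X/A`: a homomorphism `h : X/A → X` with `π ∘ h = id`. -/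
def IsRightSplit {X Q : Type*} (MX : PCM X) (MQ : PCM Q)
    (π : X → Q) (h : Q → X) : Prop :=
  MQ.IsHom MX h ∧ ∀ q, π (h q) = q

/-- A trivialisation `φ : X → A × X/A`: a homomorphism (into the product
partial monoid) with `φ ∘ i = in₁` and `proj₂ ∘ φ = π`. -/
def IsTriv {A X Q : Type*} [AddCommGroup A] (MX : PCM X) (MQ : PCM Q)
    (i : A → X) (π : X → Q) (φ : X → A × Q) : Prop :=
  φ MX.zero = (0, MQ.zero) ∧
  (∀ x y z, MX.add x y = some z →
    MQ.add (φ x).2 (φ y).2 = some (φ z).2 ∧ (φ z).1 = (φ x).1 + (φ y).1) ∧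
  (∀ a, φ (i a) = (a, MQ.zero)) ∧
  (∀ x, (φ x).2 = π x)

/-- A local trivialisation `φ : C → A × C/A` of the restriction of the sequence
to a submonoid `i(A) ⊆ C ⊆ X` (presented as a function on all of `X` whose
values off `C` are irrelevant). -/
def IsLocalTriv {A X Q : Type*} [AddCommGroup A] (MX : PCM X) (MQ : PCM Q)
    (i : A → X) (π : X → Q) (C : Set X) (φ : X → A × Q) : Prop :=
  (∀ x y z, x ∈ C → y ∈ C → MX.add x y = some z →
    MQ.add (φ x).2 (φ y).2 = some (φ z).2 ∧ (φ z).1 = (φ x).1 + (φ y).1) ∧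
  (∀ a, φ (i a) = (a, MQ.zero)) ∧
  (∀ x, x ∈ C → (φ x).2 = π x)

/-- `C` is a total submonoid of the partial monoid `X` containing `i(A)`. -/
def IsSubPCM {A X : Type*} [AddCommGroup A] (MX : PCM X) (i : A → X) (C : Set X) : Prop :=
  MX.zero ∈ C ∧
  (∀ a, i a ∈ C) ∧
  (∀ x y, x ∈ C → y ∈ C → (MX.add x y).isSome) ∧
  (∀ x y z, x ∈ C → y ∈ C → MX.add x y = some z → z ∈ C)

/-- Lemma 3.1: any trivialisation `φ : X → A × X/A` of the sequence
`A → X → X/A` is an isomorphism; its inverse sends `(a, [x])` to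
`x + i(a − proj₁(φ x))` (expressed here by: any `y = x + i(a − (φ x).1)`
satisfies `φ y = (a, π x)`). -/
theorem trivialisation_is_isomorphism {A X Q : Type*} [AddCommGroup A]
    (MX : PCM X) (MQ : PCM Q) (i : A → X) (π : X → Q)
    (hemb : EmbedData MX i) (hquot : QuotData MX MQ i π)
    (φ : X → A × Q) (hφ : IsTriv MX MQ i π φ) :
    Function.Bijective φ ∧
    ∀ x a y, MX.add x (i (a - (φ x).1)) = some y → φ y = (a, π x) := by

  obtain ⟨hz, hhom, hi, hpi⟩ := hφ
  have key : ∀ x a y, MX.add x (i (a - (φ x).1)) = some y → φ y = (a, π x) := by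
    intro x a y hy
    obtain ⟨h2, h1⟩ := hhom x (i (a - (φ x).1)) y hy
    rw [hi] at h1 h2
    have h2' : MQ.add (φ x).2 MQ.zero = some (π x) := by
      rw [MQ.comm, MQ.zero_add, hpi]
    rw [h2'] at h2
    simp only at h1
    have h1' : (φ y).1 = a := by rw [h1]; abel
    have h2'' : (φ y).2 = π x := (Option.some_injective _ h2).symm
    exact Prod.ext h1' h2''
  refine ⟨⟨?_, ?_⟩, key⟩
  · intro x y hxy
    have hpx : π x = π y := by rw [← hpi, ← hpi, hxy]
    obtain ⟨a, ha⟩ := (hquot.orbit x y).mp hpx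
    obtain ⟨h2, h1⟩ := hhom (i a) x y ha
    rw [hi] at h1
    have ha0 : a = 0 := by
      rw [hxy] at h1
      have : (φ y).1 + 0 = a + (φ y).1 := by rw [add_zero]; exact h1
      rw [add_comm a] at this
      exact (add_left_cancel this).symm
    rw [ha0, hemb.map_zero, MX.zero_add] at ha
    exact Option.some_injective _ ha
  · intro ⟨a, q⟩
    obtain ⟨x, hx⟩ := hquot.surj q
    have ht := hemb.total (a - (φ x).1) x
    rw [MX.comm] at ht
    obtain ⟨y, hy⟩ := Option.isSome_iff_exists.mp ht
    exact ⟨y, by rw [key x a y hy, hx]⟩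
end

section
/- Let A be a commutative group, X a commutative partial monoid, i : A → X an injective homomorphism with the action l_A : (a,x) ↦ i(a)+x totally defined. Then the maps φ ↦ proj₁ ∘ φ and s ↦ ⟨s, π⟩ define a bijective correspondence between trivialisations φ : X → A × X/A and left splittings s : X → A (homomorphisms with s ∘ i = id_A). -/
/-- The maps `φ ↦ proj₁ ∘ φ` and `s ↦ ⟨s, π⟩` are a bijective correspondence
between trivialisations `φ : X → A × X/A` and left splittings `s : X → A`. -/
theorem trivialisations_biject_with_left_splittings {A X Q : Type*} [AddCommGroup A]
    (MX : PCM X) (MQ : PCM Q) (i : A → X) (π : X → Q)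
    (hemb : EmbedData MX i) (hquot : QuotData MX MQ i π) :
    (∀ φ : X → A × Q, IsTriv MX MQ i π φ → IsLeftSplit MX i (fun x => (φ x).1)) ∧
    (∀ s : X → A, IsLeftSplit MX i s → IsTriv MX MQ i π (fun x => (s x, π x))) ∧
    (∀ φ : X → A × Q, IsTriv MX MQ i π φ → (fun x => ((φ x).1, π x)) = φ) ∧
    (∀ s : X → A, IsLeftSplit MX i s → (fun x => ((s x, π x) : A × Q).1) = s) := by

  have hπ0 : π MX.zero = MQ.zero := hquot.hom.1
  have hπi : ∀ a, π (i a) = MQ.zero := by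
    intro a
    have : MX.add (i a) MX.zero = some (i a) := by
      rw [MX.comm]; exact MX.zero_add (i a)
    rw [← hπ0, (hquot.orbit MX.zero (i a)).2 ⟨a, this⟩]
  refine ⟨?_, ?_, ?_, ?_⟩
  · rintro φ ⟨h0, hadd, hi, hπ⟩
    exact ⟨by simp [h0], fun x y z h => (hadd x y z h).2, fun a => by simp [hi a]⟩
  · rintro s ⟨h0, hadd, hi⟩
    refine ⟨by simp [h0, hπ0], fun x y z h => ⟨hquot.hom.2 x y z h, hadd x y z h⟩,
      fun a => by simp [hi a, hπi a], fun x => rfl⟩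
  · rintro φ ⟨h0, hadd, hi, hπ⟩
    funext x; exact Prod.ext rfl (hπ x).symm
  · intro s _; rfl
end

section
/- Let A be a commutative group, X a commutative partial monoid, i : A → X injective with the action l_A(a,x) = i(a)+x free. For every right splitting h : X/A → X (a homomorphism with π ∘ h = id), there is a unique function s : X → A satisfying h(π(x)) = x − i(s(x)) for all x, and this s is a left splitting; moreover ⟨s, π⟩ is a trivialisation and this construction Φ is a left inverse to the map φ ↦ φ⁻¹ ∘ in₂ from trivialisations to right splittings. -/
/-- Suppose the action `l_A` is free. For every right splitting `h : X/A → X`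
there is a unique function `s : X → A` with `h(π x) = x − i(s x)` for all `x`;
this `s` is a left splitting and `⟨s, π⟩` is a trivialisation. Moreover the
construction `Φ : h ↦ ⟨s, π⟩` is a left inverse of the map
`φ ↦ φ⁻¹ ∘ in₂` from trivialisations to right splittings (the right splitting
associated to `φ` being `[x] ↦ x − i((φ x).1)`). -/
theorem right_splitting_yields_trivialisation {A X Q : Type*} [AddCommGroup A]
    (MX : PCM X) (MQ : PCM Q) (i : A → X) (π : X → Q)
    (hemb : EmbedData MX i) (hquot : QuotData MX MQ i π)
    (hfree : FreeAction MX i) :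
    (∀ h : Q → X, IsRightSplit MX MQ π h →
      ∃! s : X → A, ∀ x, MX.add x (i (-(s x))) = some (h (π x))) ∧
    (∀ (h : Q → X) (s : X → A), IsRightSplit MX MQ π h →
      (∀ x, MX.add x (i (-(s x))) = some (h (π x))) →
      IsLeftSplit MX i s ∧ IsTriv MX MQ i π (fun x => (s x, π x))) ∧
    (∀ (φ : X → A × Q) (h : Q → X), IsTriv MX MQ i π φ →
      (∀ x, MX.add x (i (-(φ x).1)) = some (h (π x))) →
      ∀ s : X → A, (∀ x, MX.add x (i (-(s x))) = some (h (π x))) →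
        s = fun x => (φ x).1) := by
  classical
  -- cancellation helper: from `x + i(-a) = c` deduce `i a + c = x`
  have hcancel' : ∀ (a : A) (c x : X), MX.add x (i (-a)) = some c →
      MX.add (i a) c = some x := by
    intro a c x hx
    have h1 : MX.add (i a) (i (-a)) = some (i 0) := by
      have := hemb.map_add a (-a)
      rwa [add_neg_cancel] at this
    rw [MX.comm] at hx
    have h2 := MX.assoc (i a) (i (-a)) x (i 0) c h1 hx
    rw [hemb.map_zero, MX.zero_add] at h2
    exact h2.symm
  have hpi_i : ∀ a, π (i a) = MQ.zero := by
    intro a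
    have h0 : π (i a) = π MX.zero := by
      rw [hquot.orbit]
      refine ⟨-a, ?_⟩
      have := hemb.map_add (-a) a
      rwa [neg_add_cancel, hemb.map_zero] at this
    rw [h0, hquot.hom.1]
  refine ⟨?_, ?_, ?_⟩
  · -- existence and uniqueness of s
    intro h hh
    have hex : ∀ x : X, ∃ a, MX.add (i a) x = some (h (π x)) := by
      intro x
      have hx : π x = π (h (π x)) := (hh.2 (π x)).symm
      exact (hquot.orbit x (h (π x))).1 hx
    choose s hs using hex
    refine ⟨fun x => -(s x), fun x => ?_, ?_⟩
    · show MX.add x (i (-(-(s x)))) = some (h (π x))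
      rw [neg_neg, MX.comm]
      exact hs x
    · intro s' hs'
      funext x
      have h1 : MX.add (i (-(s' x))) x = some (h (π x)) := by
        rw [MX.comm]; exact hs' x
      have h2 := hfree _ _ _ _ h1 (hs x)
      show s' x = -(s x)
      rw [← h2, neg_neg]
  · -- s is a left splitting and ⟨s, π⟩ a trivialisation
    intro h s hh hs
    have key : ∀ x, MX.add (i (s x)) (h (π x)) = some x := fun x =>
      hcancel' _ _ _ (hs x)
    have hπ0 : π MX.zero = MQ.zero := hquot.hom.1
    have hh0 : h MQ.zero = MX.zero := hh.1.1
    have hs0 : s MX.zero = 0 := by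
      have h1 := key MX.zero
      rw [hπ0, hh0] at h1
      have h2 : MX.add (i (0 : A)) MX.zero = some MX.zero := by
        rw [hemb.map_zero, MX.zero_add]
      exact hfree _ _ _ _ h1 h2
    have hsi : ∀ a, s (i a) = a := by
      intro a
      have h1 := key (i a)
      rw [hpi_i, hh0] at h1
      have h2 : MX.add (i a) MX.zero = some (i a) := by
        rw [MX.comm, MX.zero_add]
      exact hfree _ _ _ _ h1 h2
    have hadd : ∀ x y z, MX.add x y = some z → s z = s x + s y := by
      intro x y z hxy
      have hπ : MQ.add (π x) (π y) = some (π z) := hquot.hom.2 _ _ _ hxy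
      have hπ' : MQ.add (π y) (π x) = some (π z) := by
        rw [MQ.comm]; exact hπ
      have hhz : MX.add (h (π y)) (h (π x)) = some (h (π z)) :=
        hh.1.2 _ _ _ hπ'
      obtain ⟨w, hw⟩ := Option.isSome_iff_exists.1 (hemb.total (s y) (h (π z)))
      -- y + h(π x) = i(s y) + h(π z) = w
      have h1 : MX.add y (h (π x)) = some w :=
        (MX.assoc (i (s y)) (h (π y)) (h (π x)) y (h (π z)) (key y) hhz).trans hw
      have h1' : MX.add (h (π x)) y = some w := by
        rw [MX.comm]; exact h1
      -- x + y = i(s x) + w, hence i(s x) + w = z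
      have h2 : MX.add (i (s x)) w = some z := by
        have := MX.assoc (i (s x)) (h (π x)) y x w (key x) h1'
        rw [← this]; exact hxy
      -- i(s x + s y) + h(π z) = i(s x) + w = z
      have h3 : MX.add (i (s x + s y)) (h (π z)) = some z := by
        have := MX.assoc (i (s x)) (i (s y)) (h (π z)) (i (s x + s y)) w
          (hemb.map_add _ _) hw
        rw [this]; exact h2
      exact hfree _ _ _ _ (key z) h3
    refine ⟨⟨hs0, hadd, hsi⟩, ?_, ?_, ?_, ?_⟩
    · show ((s MX.zero, π MX.zero) : A × Q) = (0, MQ.zero)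
      rw [hs0, hπ0]
    · intro x y z hxy
      exact ⟨hquot.hom.2 _ _ _ hxy, hadd _ _ _ hxy⟩
    · intro a
      show ((s (i a), π (i a)) : A × Q) = (a, MQ.zero)
      rw [hsi, hpi_i]
    · intro x; rfl
  · -- Φ is a left inverse
    intro φ h hφ hh s hs
    funext x
    have h1 : MX.add (i (-(s x))) x = some (h (π x)) := by
      rw [MX.comm]; exact hs x
    have h2 : MX.add (i (-(φ x).1)) x = some (h (π x)) := by
      rw [MX.comm]; exact hh x
    exact neg_injective (hfree _ _ _ _ h1 h2)
end

section
/- (Splitting lemma) Let A be a commutative group, X a commutative partial monoid, i : A → X injective with free action l_A, and let i(A) ⊆ C ⊆ X be a (total) submonoid with trivialisation φ : C → A × C/A. Then the following are equivalent: (1) there exists a left splitting s : X → A with s|_C = proj₁ ∘ φ; (2) there exists a right splitting h : X/A → X with h|_{C/A} = φ⁻¹ ∘ in₂; (3) there exists a trivialisation φ' : X → A × X/A with φ'|_C = φ. -/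
section Helpers

variable {A X Q : Type*} [AddCommGroup A] {MX : PCM X} {MQ : PCM Q} {i : A → X} {π : X → Q}

private lemma PCM.add_zero' (MX : PCM X) (x : X) : MX.add x MX.zero = some x := by
  rw [MX.comm]; exact MX.zero_add x

private lemma embed_cancel (hemb : EmbedData MX i) {a : A} {x y : X}
    (h : MX.add (i a) x = some y) : MX.add (i (-a)) y = some x := by
  have h2 := MX.assoc (i (-a)) (i a) x (i (-a + a)) y (hemb.map_add _ _) h
  rw [neg_add_cancel, hemb.map_zero, MX.zero_add] at h2
  exact h2.symm

private lemma pi_embed (hemb : EmbedData MX i) (hquot : QuotData MX MQ i π) (a : A) :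
    π (i a) = MQ.zero := by
  have h1 : π (i a) = π MX.zero := by
    rw [hquot.orbit]
    exact ⟨-a, by rw [hemb.map_add, neg_add_cancel, hemb.map_zero]⟩
  rw [h1, hquot.hom.1]

private lemma triv_inj (hemb : EmbedData MX i) (hquot : QuotData MX MQ i π)
    {φ' : X → A × Q} (ht : IsTriv MX MQ i π φ') : Function.Injective φ' := by
  intro x y hxy
  have hπ : π x = π y := by rw [← ht.2.2.2 x, ← ht.2.2.2 y, hxy]
  obtain ⟨a, ha⟩ := (hquot.orbit x y).mp hπ
  have h2 := (ht.2.1 (i a) x y ha).2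
  rw [ht.2.2.1 a, hxy] at h2
  have ha0 : a = 0 := right_eq_add.mp h2
  rw [ha0, hemb.map_zero, MX.zero_add] at ha
  exact Option.some.inj ha

private lemma triv_norm (hemb : EmbedData MX i) {φ' : X → A × Q}
    (ht : IsTriv MX MQ i π φ') (x : X) :
    ∃ w, MX.add (i (-(φ' x).1)) x = some w ∧ φ' w = (0, π x) := by
  obtain ⟨w, hw⟩ := Option.isSome_iff_exists.mp (hemb.total (-(φ' x).1) x)
  refine ⟨w, hw, ?_⟩
  obtain ⟨hq2, hq1⟩ := ht.2.1 _ _ _ hw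
  rw [ht.2.2.1 (-(φ' x).1)] at hq2 hq1
  simp only at hq2 hq1
  rw [MQ.zero_add] at hq2
  refine Prod.ext ?_ ?_
  · rw [hq1, neg_add_cancel]
  · rw [← Option.some.inj hq2, ht.2.2.2]

end Helpers

/-- The splitting lemma (Lemma 3.2): for a free action, a total submonoid
`i(A) ⊆ C ⊆ X` and a local trivialisation `φ : C → A × C/A`, the following
are equivalent:
(1) there is a left splitting `s : X → A` with `s|_C = proj₁ ∘ φ`;
(2) there is a right splitting `h : X/A → X` with `h|_{C/A} = φ⁻¹ ∘ in₂`
    (i.e. `h(π x) = x − i((φ x).1)` for `x ∈ C`);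
(3) there is a trivialisation `φ' : X → A × X/A` with `φ'|_C = φ`. -/
theorem splitting_lemma {A X Q : Type*} [AddCommGroup A]
    (MX : PCM X) (MQ : PCM Q) (i : A → X) (π : X → Q)
    (hemb : EmbedData MX i) (hquot : QuotData MX MQ i π)
    (hfree : FreeAction MX i)
    (C : Set X) (hC : IsSubPCM MX i C)
    (φ : X → A × Q) (hφ : IsLocalTriv MX MQ i π C φ) :
    ((∃ s : X → A, IsLeftSplit MX i s ∧ ∀ x ∈ C, s x = (φ x).1) ↔
      (∃ φ' : X → A × Q, IsTriv MX MQ i π φ' ∧ ∀ x ∈ C, φ' x = φ x)) ∧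
    ((∃ h : Q → X, IsRightSplit MX MQ π h ∧
        ∀ x ∈ C, MX.add x (i (-(φ x).1)) = some (h (π x))) ↔
      (∃ φ' : X → A × Q, IsTriv MX MQ i π φ' ∧ ∀ x ∈ C, φ' x = φ x)) := by
  constructor
  · constructor
    · -- (1) → (3)
      rintro ⟨s, hs, hsC⟩
      refine ⟨fun x => (s x, π x), ⟨?_, ?_, ?_, fun x => rfl⟩, ?_⟩
      · dsimp only; rw [hs.1, hquot.hom.1]
      · intro x y z h
        exact ⟨hquot.hom.2 x y z h, hs.2.1 x y z h⟩
      · intro a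
        dsimp only; rw [hs.2.2 a, pi_embed hemb hquot]
      · intro x hx
        dsimp only; exact Prod.ext (hsC x hx) ((hφ.2.2 x hx).symm)
    · -- (3) → (1)
      rintro ⟨φ', ht, htC⟩
      refine ⟨fun x => (φ' x).1, ⟨?_, fun x y z h => (ht.2.1 x y z h).2, fun a => ?_⟩, ?_⟩
      · dsimp only; rw [ht.1]
      · dsimp only; rw [ht.2.2.1 a]
      · intro x hx
        dsimp only; rw [htC x hx]
  · constructor
    · -- (2) → (3)
      rintro ⟨h, hh, hhC⟩
      have hex : ∀ x : X, ∃ a, MX.add (i a) (h (π x)) = some x :=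
        fun x => (hquot.orbit (h (π x)) x).mp (hh.2 (π x))
      set α : X → A := fun x => (hex x).choose with hα
      have hspec : ∀ x, MX.add (i (α x)) (h (π x)) = some x := fun x => (hex x).choose_spec
      have huniq : ∀ x a, MX.add (i a) (h (π x)) = some x → a = α x :=
        fun x a ha => hfree a (α x) _ _ ha (hspec x)
      refine ⟨fun x => (α x, π x), ⟨?_, ?_, ?_, fun x => rfl⟩, ?_⟩
      · dsimp only; refine Prod.ext ?_ (hquot.hom.1)
        have h0 : MX.add (i 0) (h (π MX.zero)) = some MX.zero := by
          rw [hquot.hom.1, hh.1.1, hemb.map_zero, MX.zero_add]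
        exact (huniq MX.zero 0 h0).symm
      · intro x y z hz
        dsimp only
        refine ⟨hquot.hom.2 x y z hz, ?_⟩
        -- α z = α x + α y
        set u := h (π x); set v := h (π y); set w := h (π z)
        have huv : MX.add u v = some w := hh.1.2 (π x) (π y) (π z) (hquot.hom.2 x y z hz)
        have hvu : MX.add v u = some w := by rw [MX.comm]; exact huv
        obtain ⟨t, ht⟩ := Option.isSome_iff_exists.mp (hemb.total (α y) w)
        have hyu : MX.add y u = some t :=
          (MX.assoc (i (α y)) v u y w (hspec y) hvu).trans ht
        have huy : MX.add u y = some t := by rw [MX.comm]; exact hyu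
        have hiat : MX.add (i (α x)) t = some z :=
          (MX.assoc (i (α x)) u y x t (hspec x) huy).symm.trans hz
        have hfin : MX.add (i (α x + α y)) w = some z :=
          (MX.assoc (i (α x)) (i (α y)) w (i (α x + α y)) t (hemb.map_add _ _) ht).trans hiat
        exact (huniq z (α x + α y) hfin).symm
      · intro a
        dsimp only; refine Prod.ext ?_ (pi_embed hemb hquot a)
        have ha : MX.add (i a) (h (π (i a))) = some (i a) := by
          rw [pi_embed hemb hquot, hh.1.1, MX.add_zero']
        exact (huniq (i a) a ha).symm
      · intro x hx
        dsimp only; refine Prod.ext ?_ ((hφ.2.2 x hx).symm)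
        have h1 : MX.add (i (-(φ x).1)) x = some (h (π x)) := by
          rw [MX.comm]; exact hhC x hx
        have h2 := embed_cancel hemb h1
        rw [neg_neg] at h2
        exact (huniq x (φ x).1 h2).symm
    · -- (3) → (2)
      rintro ⟨φ', ht, htC⟩
      have hinj := triv_inj hemb hquot ht
      have hex : ∀ q : Q, ∃ w, φ' w = (0, q) := by
        intro q
        obtain ⟨x, hx⟩ := hquot.surj q
        obtain ⟨w, _, hw⟩ := triv_norm hemb ht x
        exact ⟨w, by rw [hw, hx]⟩
      set h : Q → X := fun q => (hex q).choose with hhdef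
      have hspec : ∀ q, φ' (h q) = (0, q) := fun q => (hex q).choose_spec
      have hπh : ∀ q, π (h q) = q := by
        intro q
        rw [← ht.2.2.2 (h q), hspec q]
      refine ⟨h, ⟨⟨?_, ?_⟩, hπh⟩, ?_⟩
      · apply hinj
        rw [hspec, ht.1]
      · intro q q' r hr
        have hlift : (MX.add (h q) (h q')).isSome := by
          apply hquot.lift (h q) (h q') r
          rw [hπh, hπh]; exact hr
        obtain ⟨z, hz⟩ := Option.isSome_iff_exists.mp hlift
        obtain ⟨hq2, hq1⟩ := ht.2.1 _ _ _ hz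
        rw [hspec q, hspec q'] at hq2 hq1
        simp only at hq2 hq1
        rw [hr] at hq2
        have h2 : (φ' z).2 = r := (Option.some.inj hq2).symm
        have h1 : (φ' z).1 = 0 := by rw [hq1, add_zero]
        have hzr : z = h r := by
          apply hinj
          rw [hspec r]
          exact Prod.ext h1 h2
        rw [← hzr]; exact hz
      · intro x hx
        obtain ⟨w, hw, hw2⟩ := triv_norm hemb ht x
        have hwhx : w = h (π x) := by
          apply hinj
          rw [hspec (π x), hw2]
        rw [MX.comm, ← htC x hx, ← hwhx]
        exact hw
end

section
/- Let A, X, i, C, φ be as in the splitting lemma (l_A free, i(A) ⊆ C ⊆ X submonoid, φ a local trivialisation) and let η : X/A → X be a choice of orbit representatives agreeing with φ⁻¹ ∘ in₂ on C/A. Define β(q₁,q₂) ∈ A by η(q₁+q₂) = η(q₁) + η(q₂) + i(β(q₁,q₂)) whenever q₁+q₂ is defined. Then β is a well-defined relative 2-cocycle: β ∈ Z²(X/A, C/A; A). -/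
/-- `η : X/A → X` is a set-theoretic section of `π` (a choice of orbit
representatives). -/
def IsSection {X Q : Type*} (π : X → Q) (η : Q → X) : Prop :=
  ∀ q, π (η q) = q

/-- `η` agrees with the right splitting `φ⁻¹ ∘ in₂` determined by the local
trivialisation `φ` on `C/A`: for `x ∈ C`, `η([x]) = x − i((φ x).1)`. -/
def AgreesOnC {A X Q : Type*} [AddCommGroup A] (MX : PCM X)
    (i : A → X) (π : X → Q) (C : Set X) (φ : X → A × Q) (η : Q → X) : Prop :=
  ∀ x ∈ C, MX.add (i (-(φ x).1)) x = some (η (π x))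

/-- `β : X/A × X/A → A` is the 2-cochain measuring the failure of `η` to be
a homomorphism: `η(q₁ + q₂) = η(q₁) + η(q₂) + i(β(q₁, q₂))` whenever
`q₁ + q₂` is defined. -/
def BetaSpec {A X Q : Type*} [AddCommGroup A] (MX : PCM X) (MQ : PCM Q)
    (i : A → X) (η : Q → X) (β : Q → Q → A) : Prop :=
  ∀ q₁ q₂ q₁₂, MQ.add q₁ q₂ = some q₁₂ →
    ∃ w, MX.add (η q₁) (η q₂) = some w ∧
      MX.add (i (β q₁ q₂)) w = some (η q₁₂)

/-- The obstruction cochain is a well-defined relative 2-cocycle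
`β ∈ Z²(X/A, C/A; A)`: a `β` satisfying the defining equation exists, is
uniquely determined on defined pairs (by freeness), vanishes on `(C/A)₂`
(since `η` restricted to `C/A` is a homomorphism), and satisfies the 2-cocycle
identity `β(q₂,q₃) − β(q₁+q₂,q₃) + β(q₁,q₂+q₃) − β(q₁,q₂) = 0`. -/
theorem beta_is_relative_cocycle {A X Q : Type*} [AddCommGroup A]
    (MX : PCM X) (MQ : PCM Q) (i : A → X) (π : X → Q)
    (hemb : EmbedData MX i) (hquot : QuotData MX MQ i π)
    (hfree : FreeAction MX i)
    (C : Set X) (hC : IsSubPCM MX i C)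
    (φ : X → A × Q) (hφ : IsLocalTriv MX MQ i π C φ)
    (η : Q → X) (hη : IsSection π η) (hagree : AgreesOnC MX i π C φ η) :
    (∃ β : Q → Q → A, BetaSpec MX MQ i η β) ∧
    (∀ β β' : Q → Q → A, BetaSpec MX MQ i η β → BetaSpec MX MQ i η β' →
      ∀ q₁ q₂ q₁₂, MQ.add q₁ q₂ = some q₁₂ → β q₁ q₂ = β' q₁ q₂) ∧
    (∀ β : Q → Q → A, BetaSpec MX MQ i η β →
      (∀ x ∈ C, ∀ y ∈ C, ∀ q, MQ.add (π x) (π y) = some q → β (π x) (π y) = 0) ∧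
      (∀ q₁ q₂ q₃ q₁₂ q₂₃ t,
        MQ.add q₁ q₂ = some q₁₂ → MQ.add q₂ q₃ = some q₂₃ →
        MQ.add q₁₂ q₃ = some t →
        β q₂ q₃ - β q₁₂ q₃ + β q₁ q₂₃ - β q₁ q₂ = 0)) := by
  classical
  have key : ∀ q₁ q₂ q₁₂, MQ.add q₁ q₂ = some q₁₂ →
      ∃ a w, MX.add (η q₁) (η q₂) = some w ∧ MX.add (i a) w = some (η q₁₂) := by
    intro q₁ q₂ q₁₂ hq
    have hdef : (MX.add (η q₁) (η q₂)).isSome :=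
      hquot.lift _ _ q₁₂ (by rw [hη, hη]; exact hq)
    obtain ⟨w, hw⟩ := Option.isSome_iff_exists.mp hdef
    have hπw : π w = q₁₂ := by
      have h := hquot.hom.2 (η q₁) (η q₂) w hw
      rw [hη, hη, hq] at h
      exact (Option.some.inj h).symm
    have hpp : π w = π (η q₁₂) := by rw [hπw, hη]
    obtain ⟨a, ha⟩ := (hquot.orbit w (η q₁₂)).mp hpp
    exact ⟨a, w, hw, ha⟩
  have uniq : ∀ β β' : Q → Q → A, BetaSpec MX MQ i η β → BetaSpec MX MQ i η β' →
      ∀ q₁ q₂ q₁₂, MQ.add q₁ q₂ = some q₁₂ → β q₁ q₂ = β' q₁ q₂ := by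
    intro β β' hβ hβ' q₁ q₂ q₁₂ hq
    obtain ⟨w, hw, ha⟩ := hβ q₁ q₂ q₁₂ hq
    obtain ⟨w', hw', ha'⟩ := hβ' q₁ q₂ q₁₂ hq
    rw [hw] at hw'
    obtain rfl := Option.some.inj hw'
    exact hfree _ _ _ _ ha ha'
  refine ⟨?_, uniq, ?_⟩
  · refine ⟨fun q₁ q₂ => if h : ∃ q₁₂, MQ.add q₁ q₂ = some q₁₂ then
      (key q₁ q₂ h.choose h.choose_spec).choose else 0, ?_⟩
    intro q₁ q₂ q₁₂ hq
    have hex : ∃ q₁₂, MQ.add q₁ q₂ = some q₁₂ := ⟨q₁₂, hq⟩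
    simp only [dif_pos hex]
    obtain ⟨w, hw, ha⟩ := (key q₁ q₂ hex.choose hex.choose_spec).choose_spec
    have heq : hex.choose = q₁₂ := Option.some.inj (hex.choose_spec.symm.trans hq)
    exact ⟨w, hw, heq ▸ ha⟩
  · intro β hβ
    constructor
    · intro x hx y hy q hq
      obtain ⟨w, hw, ha⟩ := hβ (π x) (π y) q hq
      have hx' := hagree x hx
      have hy' := hagree y hy
      have hx'C : η (π x) ∈ C := hC.2.2.2 _ _ _ (hC.2.1 _) hx hx'
      have hy'C : η (π y) ∈ C := hC.2.2.2 _ _ _ (hC.2.1 _) hy hy'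
      have hφx' : (φ (η (π x))).1 = 0 := by
        have h := (hφ.1 _ _ _ (hC.2.1 (-(φ x).1)) hx hx').2
        rw [hφ.2.1] at h
        simpa using h
      have hφy' : (φ (η (π y))).1 = 0 := by
        have h := (hφ.1 _ _ _ (hC.2.1 (-(φ y).1)) hy hy').2
        rw [hφ.2.1] at h
        simpa using h
      have hwC : w ∈ C := hC.2.2.2 _ _ _ hx'C hy'C hw
      have hφw : (φ w).1 = 0 := by
        have h := (hφ.1 _ _ _ hx'C hy'C hw).2
        rw [hφx', hφy'] at h
        simpa using h
      have hπw : π w = q := by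
        have h := hquot.hom.2 _ _ _ hw
        rw [hη, hη, hq] at h
        exact (Option.some.inj h).symm
      have hwag := hagree w hwC
      rw [hφw, neg_zero, hemb.map_zero, MX.zero_add, hπw] at hwag
      -- hwag : some w = some (η q)
      have hweq : w = η q := Option.some.inj hwag
      have ha' : MX.add (i (β (π x) (π y))) w = some w := by rw [ha, ← hweq]
      have hzero : MX.add (i (0 : A)) w = some w := by
        rw [hemb.map_zero, MX.zero_add]
      exact hfree _ _ _ _ ha' hzero
    · intro q₁ q₂ q₃ q₁₂ q₂₃ t h12 h23 ht
      have h123 : MQ.add q₁ q₂₃ = some t := by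
        rw [← MQ.assoc q₁ q₂ q₃ q₁₂ q₂₃ h12 h23]; exact ht
      obtain ⟨w₁₂, hw₁₂, ha₁₂⟩ := hβ q₁ q₂ q₁₂ h12
      obtain ⟨w₂₃, hw₂₃, ha₂₃⟩ := hβ q₂ q₃ q₂₃ h23
      obtain ⟨u, hu, hau⟩ := hβ q₁₂ q₃ t ht
      obtain ⟨v, hv, hav⟩ := hβ q₁ q₂₃ t h123
      have hπ12 : π w₁₂ = q₁₂ := by
        have h := hquot.hom.2 _ _ _ hw₁₂
        rw [hη, hη, h12] at h
        exact (Option.some.inj h).symm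
      have hs : (MX.add w₁₂ (η q₃)).isSome :=
        hquot.lift _ _ t (by rw [hπ12, hη]; exact ht)
      obtain ⟨s, hsw⟩ := Option.isSome_iff_exists.mp hs
      have eqA : MX.add (i (β q₁₂ q₃ + β q₁ q₂)) s = some (η t) := by
        have h1 := MX.assoc _ _ _ _ _ ha₁₂ hsw
        have h2 : MX.add (i (β q₁ q₂)) s = some u := by rw [← h1]; exact hu
        have h3 := MX.assoc _ _ _ _ _ (hemb.map_add (β q₁₂ q₃) (β q₁ q₂)) h2
        rw [h3]; exact hau
      have hsw' : MX.add (η q₁) w₂₃ = some s := by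
        rw [← MX.assoc _ _ _ _ _ hw₁₂ hw₂₃]; exact hsw
      have hws : MX.add w₂₃ (η q₁) = some s := (MX.comm _ _).trans hsw'
      have h1' := MX.assoc _ _ _ _ _ ha₂₃ hws
      have h2' : MX.add (i (β q₂ q₃)) s = some v := by
        rw [← h1', MX.comm]; exact hv
      have eqB : MX.add (i (β q₁ q₂₃ + β q₂ q₃)) s = some (η t) := by
        have h3 := MX.assoc _ _ _ _ _ (hemb.map_add (β q₁ q₂₃) (β q₂ q₃)) h2'
        rw [h3]; exact hav
      have hfin : β q₁₂ q₃ + β q₁ q₂ = β q₁ q₂₃ + β q₂ q₃ :=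
        hfree _ _ _ _ eqA eqB
      have hg : β q₂ q₃ - β q₁₂ q₃ + β q₁ q₂₃ - β q₁ q₂ =
          (β q₁ q₂₃ + β q₂ q₃) - (β q₁₂ q₃ + β q₁ q₂) := by abel
      rw [hg, ← hfin, sub_self]
end
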